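/- If R is a weakly strongly 2-nil-clean ring, then the Jacobson radical J(R) is a nil ideal, i.e., every element of J(R) is nilpotent. -/

import Mathlib

/-- A ring is weakly strongly 2-nil-clean if every element is `±e ± f + n` with
`e, f` idempotents and `n` nilpotent, all commuting with each other. -/
def IsWeaklyStrongly2NilClean (R : Type*) [Ring R] : Prop :=
  ∀ a : R, ∃ e f n : R, IsIdempotentElem e ∧ IsIdempotentElem f ∧ IsNilpotent n ∧
    Commute e f ∧ Commute e n ∧ Commute f n ∧
    (a = e + f + n ∨ a = e - f + n ∨ a = -e + f + n ∨ a = -e - f + n)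

/-- A ring is strongly 2-nil-clean if every element is `e + f + n` with
`e, f` idempotents and `n` nilpotent, all commuting with each other. -/
def IsStrongly2NilClean (R : Type*) [Ring R] : Prop :=
  ∀ a : R, ∃ e f n : R, IsIdempotentElem e ∧ IsIdempotentElem f ∧ IsNilpotent n ∧
    Commute e f ∧ Commute e n ∧ Commute f n ∧ a = e + f + n


section Aux
variable {R : Type*} [Ring R]




lemma jac_unit_one_sub' {x : R} (hx : x ∈ Ideal.jacobson (⊥ : Ideal R)) : IsUnit (1 - x) := by
  have hlinv : ∀ y : R, y ∈ Ideal.jacobson (⊥ : Ideal R) → ∃ z : R, z * (1 - y) = 1 := by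
    intro y hy
    have h1 : (1 : R) - y - 1 ∈ Ideal.jacobson (⊥ : Ideal R) := by
      simpa using neg_mem hy
    obtain ⟨s, hs⟩ := Ideal.exists_mul_sub_mem_of_sub_one_mem_jacobson (1 - y) h1
    exact ⟨s, by rwa [Ideal.mem_bot, sub_eq_zero] at hs⟩
  obtain ⟨z, hz⟩ := hlinv x hx
  have hzx : z * x ∈ Ideal.jacobson (⊥ : Ideal R) := Ideal.mul_mem_left _ z hx
  have hz' : z = 1 + z * x := by
    have h : z - z * x = 1 := by rw [← hz]; noncomm_ring
    rw [← h]; noncomm_ring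
  obtain ⟨w, hw⟩ := hlinv (-(z * x)) (neg_mem hzx)
  have hwz : w * z = 1 := by
    rw [hz']
    simpa [sub_neg_eq_add] using hw
  have hweq : w = 1 - x := by
    calc w = w * (z * (1 - x)) := by rw [hz, mul_one]
    _ = (w * z) * (1 - x) := by rw [mul_assoc]
    _ = 1 - x := by rw [hwz, one_mul]
  exact ⟨⟨1 - x, z, by rw [← hweq]; exact hwz, hz⟩, rfl⟩






/-- Cube of a difference of commuting idempotents. -/
lemma diff_cube' {e f : R} (he : IsIdempotentElem e) (hf : IsIdempotentElem f)
    (hef : Commute e f) : (e - f) * ((e - f) * (e - f)) = e - f := by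
  have hfe : f * e = e * f := hef.eq.symm
  have hee : e * e = e := he
  have hff : f * f = f := hf
  have h1 : e * (e * f) = e * f := by rw [← mul_assoc, hee]
  have h2 : f * (e * f) = e * f := by rw [← mul_assoc, hfe, mul_assoc, hff]
  have hs2 : (e - f) * (e - f) = e + f - 2 * (e * f) := by
    have h : (e - f) * (e - f) = e * e - e * f - (f * e - f * f) := by noncomm_ring
    rw [h, hee, hff, hfe]; noncomm_ring
  rw [hs2]
  have h : (e - f) * (e + f - 2 * (e * f)) =
      e * e + e * f - 2 * (e * (e * f)) - (f * e + f * f - 2 * (f * (e * f))) := by noncomm_ring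
  rw [h, hee, hff, hfe, h1, h2]; noncomm_ring

lemma main1' {e f : R} (he : IsIdempotentElem e) (hf : IsIdempotentElem f) (hef : Commute e f)
    (hu1 : IsUnit (1 - (e - f))) (hu2 : IsUnit (1 + (e - f))) : e - f = 0 := by
  have hs3 := diff_cube' he hf hef
  have key : (e - f) * ((1 - (e - f)) * (1 + (e - f))) = 0 := by
    have h : (e - f) * ((1 - (e - f)) * (1 + (e - f)))
        = (e - f) - (e - f) * ((e - f) * (e - f)) := by noncomm_ring
    rw [h, hs3, sub_self]
  exact ((hu1.mul hu2).mul_left_eq_zero).mp key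

lemma sum_sq' {e f : R} (he : IsIdempotentElem e) (hf : IsIdempotentElem f)
    (hef : Commute e f) : (e + f) * (e + f) = (e + f) + 2 * (e * f) := by
  have hfe : f * e = e * f := hef.eq.symm
  have h : (e + f) * (e + f) = e * e + e * f + (f * e + f * f) := by noncomm_ring
  rw [h, he.eq, hf.eq, hfe]; noncomm_ring

/-- Cube relation for sum of commuting idempotents. -/
lemma sum_cube' {e f : R} (he : IsIdempotentElem e) (hf : IsIdempotentElem f)
    (hef : Commute e f) :
    (e + f) * ((e + f) * (e + f)) = 3 * ((e + f) * (e + f)) - 2 * (e + f) := by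
  have hfe : f * e = e * f := hef.eq.symm
  have h1 : e * (e * f) = e * f := by rw [← mul_assoc, he.eq]
  have h2 : f * (e * f) = e * f := by rw [← mul_assoc, hfe, mul_assoc, hf.eq]
  have h5 := sum_sq' he hf hef
  rw [h5]
  have h : (e + f) * ((e + f) + 2 * (e * f))
      = (e + f) * (e + f) + 2 * (e * (e * f)) + 2 * (f * (e * f)) := by noncomm_ring
  rw [h, h1, h2, h5]; noncomm_ring

lemma main2aux' {t : R} (ht2 : t * t = 2 * t) (h120 : IsNilpotent (120 : R))
    (hu2 : IsUnit (1 + t)) (hu3 : IsUnit (1 + t * t)) : IsNilpotent t := by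
  obtain ⟨N, hN⟩ := h120
  set v := (1 + t) * (1 + t * t) with hv
  have hvu : IsUnit v := hu2.mul hu3
  have h4 : t * (t * t) = 4 * t := by
    rw [ht2]
    have h : t * (2 * t) = 2 * (t * t) := by noncomm_ring
    rw [h, ht2]; noncomm_ring
  have h8 : t * (t * (t * t)) = 8 * t := by
    rw [h4]
    have h : t * (4 * t) = 4 * (t * t) := by noncomm_ring
    rw [h, ht2]; noncomm_ring
  have htv : t * v = 15 * t := by
    have h : t * v = t + t * (t * t) + t * t + t * (t * (t * t)) := by rw [hv]; noncomm_ring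
    rw [h, h8, h4, ht2]; noncomm_ring
  have htvk : ∀ k : ℕ, t * v ^ k = (15 : R) ^ k * t := by
    intro k; induction k with
    | zero => simp
    | succ k ih =>
      rw [pow_succ, ← mul_assoc, ih, mul_assoc, htv, ← mul_assoc, ← pow_succ]
  have hc815 : ((2 : R)) ^ (3 * N) * ((15 : R)) ^ N = (120 : R) ^ N := by
    have c : Commute (8 : R) (15 : R) := by
      show (8 : R) * 15 = 15 * 8
      norm_num
    have h23 : (2 : R) ^ 3 = 8 := by norm_num
    rw [pow_mul, h23, ← c.mul_pow]
    norm_num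
  have hcancel : (2 : R) ^ (3 * N) * t = 0 := by
    have key : ((2 : R) ^ (3 * N) * t) * v ^ N = 0 := by
      rw [mul_assoc, htvk, ← mul_assoc, hc815, hN, zero_mul]
    exact ((hvu.pow N).mul_left_eq_zero).mp key
  have htk : ∀ k : ℕ, t ^ (k + 1) = (2 : R) ^ k * t := by
    intro k; induction k with
    | zero => simp
    | succ k ih => rw [pow_succ, ih, mul_assoc, ht2, ← mul_assoc, ← pow_succ]
  exact ⟨3 * N + 1, by rw [htk, hcancel]⟩

lemma main2' {e f : R} (he : IsIdempotentElem e) (hf : IsIdempotentElem f) (hef : Commute e f)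
    (h120 : IsNilpotent (120 : R)) (hu1 : IsUnit (1 - (e + f))) (hu2 : IsUnit (1 + (e + f)))
    (hu3 : IsUnit (1 + (e + f) * (e + f))) : IsNilpotent (e + f) := by
  have hfe : f * e = e * f := hef.eq.symm
  have h3 : (e * f) * e = e * f := by rw [mul_assoc, hfe, ← mul_assoc, he.eq]
  have h4 : (e * f) * f = e * f := by rw [mul_assoc, hf.eq]
  have hg : (e + f - 2 * (e * f)) * (1 - (e + f)) = 0 := by
    have h : (e + f - 2 * (e * f)) * (1 - (e + f)) =
        (e + f - 2 * (e * f)) -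
          (e * e + e * f + (f * e + f * f) - (2 * ((e * f) * e) + 2 * ((e * f) * f))) := by
      noncomm_ring
    rw [h, he.eq, hf.eq, hfe, h3, h4]; noncomm_ring
  have hg0 : e + f = 2 * (e * f) := by
    have := (hu1.mul_left_eq_zero).mp hg
    rwa [sub_eq_zero] at this
  have ht2 : (e + f) * (e + f) = 2 * (e + f) := by
    rw [sum_sq' he hf hef, ← hg0]; noncomm_ring
  exact main2aux' ht2 h120 hu2 hu3



lemma nil_of_eq_mul_nil {n c : R} (hn : IsNilpotent n) (hcom : Commute n c) {a : R}
    (ha : a = n * c) : IsNilpotent a := ha ▸ hcom.isNilpotent_mul_right hn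

lemma nil120' (hR : IsWeaklyStrongly2NilClean R) : IsNilpotent (120 : R) := by
  obtain ⟨e, f, n, he, hf, hn, hef, hen, hfn, hc⟩ := hR 3
  rcases hc with hc | hc | hc | hc
  · -- 3 = e + f + n, t = e+f = 3 - n, 6 nilpotent
    have hts : e + f = 3 - n := eq_sub_of_add_eq hc.symm
    have hcube := sum_cube' he hf hef
    rw [hts] at hcube
    have h6 : (6 : R) = n * (11 - 6 * n + n * n) := by
      have hz : (6 : R) - n * (11 - 6 * n + n * n) =
          ((3 : R) - n) * (((3 : R) - n) * ((3 : R) - n)) -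
            (3 * (((3 : R) - n) * ((3 : R) - n)) - 2 * ((3 : R) - n)) := by
        noncomm_ring
        simp only [smul_eq_mul, zsmul_eq_mul, nsmul_eq_mul]
        push_cast
        norm_num
        abel
      rw [hcube, sub_self] at hz
      exact sub_eq_zero.mp hz
    have h6n : IsNilpotent (6 : R) :=
      nil_of_eq_mul_nil hn (by show n * _ = _ * n; noncomm_ring) h6
    have h120 : (120 : R) = 6 * 20 := by norm_num
    exact h120 ▸ (show Commute (6 : R) 20 by show (6:R)*20 = 20*6; norm_num).isNilpotent_mul_right h6n
  · -- 3 = e - f + n, s = e-f = 3 - n, 24 nilpotent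
    have hts : e - f = 3 - n := eq_sub_of_add_eq hc.symm
    have hcube := diff_cube' he hf hef
    rw [hts] at hcube
    have h24 : (24 : R) = n * (26 - 9 * n + n * n) := by
      have hz : (24 : R) - n * (26 - 9 * n + n * n) =
          ((3 : R) - n) * (((3 : R) - n) * ((3 : R) - n)) - ((3 : R) - n) := by
        noncomm_ring
        simp only [smul_eq_mul, zsmul_eq_mul, nsmul_eq_mul]
        push_cast
        norm_num
        abel
      rw [hcube, sub_self] at hz
      exact sub_eq_zero.mp hz
    have h24n : IsNilpotent (24 : R) :=
      nil_of_eq_mul_nil hn (by show n * _ = _ * n; noncomm_ring) h24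
    have h120 : (120 : R) = 24 * 5 := by norm_num
    exact h120 ▸ (show Commute (24 : R) 5 by show (24:R)*5 = 5*24; norm_num).isNilpotent_mul_right h24n
  · -- 3 = -e + f + n, s = f - e = 3 - n
    have hts : f - e = 3 - n := by rw [hc]; noncomm_ring
    have hcube := diff_cube' hf he hef.symm
    rw [hts] at hcube
    have h24 : (24 : R) = n * (26 - 9 * n + n * n) := by
      have hz : (24 : R) - n * (26 - 9 * n + n * n) =
          ((3 : R) - n) * (((3 : R) - n) * ((3 : R) - n)) - ((3 : R) - n) := by
        noncomm_ring
        simp only [smul_eq_mul, zsmul_eq_mul, nsmul_eq_mul]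
        push_cast
        norm_num
        abel
      rw [hcube, sub_self] at hz
      exact sub_eq_zero.mp hz
    have h24n : IsNilpotent (24 : R) :=
      nil_of_eq_mul_nil hn (by show n * _ = _ * n; noncomm_ring) h24
    have h120 : (120 : R) = 24 * 5 := by norm_num
    exact h120 ▸ (show Commute (24 : R) 5 by show (24:R)*5 = 5*24; norm_num).isNilpotent_mul_right h24n
  · -- 3 = -e - f + n, t = e+f = n - 3, 60 nilpotent
    have hts : e + f = n - 3 := by rw [hc]; noncomm_ring
    have hcube := sum_cube' he hf hef
    rw [hts] at hcube
    have h60 : (60 : R) = n * (47 - 12 * n + n * n) := by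
      have hz : (60 : R) - n * (47 - 12 * n + n * n) =
          (3 * ((n - (3 : R)) * (n - (3 : R))) - 2 * (n - (3 : R))) -
            (n - (3 : R)) * ((n - (3 : R)) * (n - (3 : R))) := by
        noncomm_ring
        simp only [smul_eq_mul, zsmul_eq_mul, nsmul_eq_mul]
        push_cast
        norm_num
        abel
      rw [hcube, sub_self] at hz
      exact sub_eq_zero.mp hz
    have h60n : IsNilpotent (60 : R) :=
      nil_of_eq_mul_nil hn (by show n * _ = _ * n; noncomm_ring) h60
    have h120 : (120 : R) = 60 * 2 := by norm_num
    exact h120 ▸ (show Commute (60 : R) 2 by show (60:R)*2 = 2*60; norm_num).isNilpotent_mul_right h60n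






theorem jacobson_nil_of_wsnc' (hR : IsWeaklyStrongly2NilClean R) :
    ∀ x ∈ Ideal.jacobson (⊥ : Ideal R), IsNilpotent x := by
  intro x hx
  have h120 := nil120' hR
  obtain ⟨e, f, n, he, hf, hn, hef, hen, hfn, hc⟩ := hR x
  have hu1 : IsUnit (1 - x) := jac_unit_one_sub' hx
  have hu1' : IsUnit (1 + x) := by
    have h := jac_unit_one_sub' (neg_mem hx)
    simpa [sub_neg_eq_add] using h
  have hxx : x * x ∈ Ideal.jacobson (⊥ : Ideal R) := Ideal.mul_mem_left _ x hx
  have hu2 : IsUnit (1 + x * x) := by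
    have h := jac_unit_one_sub' (neg_mem hxx)
    simpa [sub_neg_eq_add] using h
  rcases hc with hc | hc | hc | hc
  · -- x = e + f + n
    have hnx : Commute n x := by
      rw [hc]; exact (hen.symm.add_right hfn.symm).add_right (Commute.refl n)
    have hts : e + f = x - n := eq_sub_of_add_eq hc.symm
    have hU1 : IsUnit (1 - (e + f)) := by
      rw [hts]
      have hid : (1 : R) - (x - n) = (1 - x) + n := by noncomm_ring
      rw [hid]
      exact hn.isUnit_add_left_of_commute hu1 ((Commute.one_right n).sub_right hnx)
    have hU2 : IsUnit (1 + (e + f)) := by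
      rw [hts]
      have hid : (1 : R) + (x - n) = (1 + x) + (-n) := by noncomm_ring
      rw [hid]
      exact hn.neg.isUnit_add_left_of_commute hu1'
        (((Commute.one_right n).add_right hnx).neg_left)
    have hU3 : IsUnit (1 + (e + f) * (e + f)) := by
      rw [hts]
      have hid : (1 : R) + (x - n) * (x - n) = (1 + x * x) + n * (n - 2 * x) := by
        have h2 : (1 : R) + (x - n) * (x - n) - ((1 + x * x) + n * (n - 2 * x))
            = n * x - x * n := by noncomm_ring
        have h3 : n * x - x * n = 0 := by rw [hnx.eq, sub_self]
        rw [h3] at h2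
        exact sub_eq_zero.mp h2
      rw [hid]
      have c2x : Commute n (2 * x) := by
        refine Commute.mul_right ?_ hnx
        show n * (2 : R) = (2 : R) * n
        noncomm_ring
      have cm : Commute (n * (n - 2 * x)) (1 + x * x) := by
        refine Commute.mul_left ?_ ?_
        · exact (Commute.one_right n).add_right (hnx.mul_right hnx)
        · refine Commute.sub_left ((Commute.one_right n).add_right (hnx.mul_right hnx)) ?_
          refine Commute.mul_left ?_ ?_
          · show (2 : R) * (1 + x * x) = (1 + x * x) * 2
            noncomm_ring
          · exact (Commute.one_right x).add_right
              ((Commute.refl x).mul_right (Commute.refl x))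
      have hmnil : IsNilpotent (n * (n - 2 * x)) :=
        ((Commute.refl n).sub_right c2x).isNilpotent_mul_right hn
      exact hmnil.isUnit_add_left_of_commute hu2 cm
    have ht : IsNilpotent (e + f) := main2' he hf hef h120 hU1 hU2 hU3
    rw [hc]
    exact (hen.add_left hfn).isNilpotent_add ht hn
  · -- x = e - f + n
    have hnx : Commute n x := by
      rw [hc]; exact (hen.symm.sub_right hfn.symm).add_right (Commute.refl n)
    have hts : e - f = x - n := eq_sub_of_add_eq hc.symm
    have hU1 : IsUnit (1 - (e - f)) := by
      rw [hts]
      have hid : (1 : R) - (x - n) = (1 - x) + n := by noncomm_ring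
      rw [hid]
      exact hn.isUnit_add_left_of_commute hu1 ((Commute.one_right n).sub_right hnx)
    have hU2 : IsUnit (1 + (e - f)) := by
      rw [hts]
      have hid : (1 : R) + (x - n) = (1 + x) + (-n) := by noncomm_ring
      rw [hid]
      exact hn.neg.isUnit_add_left_of_commute hu1'
        (((Commute.one_right n).add_right hnx).neg_left)
    have hs0 : e - f = 0 := main1' he hf hef hU1 hU2
    rw [hc, hs0, zero_add]
    exact hn
  · -- x = -e + f + n
    have hnx : Commute n x := by
      rw [hc]; exact ((hen.symm.neg_right.add_right hfn.symm).add_right (Commute.refl n))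
    have hts : f - e = x - n := by rw [hc]; noncomm_ring
    have hU1 : IsUnit (1 - (f - e)) := by
      rw [hts]
      have hid : (1 : R) - (x - n) = (1 - x) + n := by noncomm_ring
      rw [hid]
      exact hn.isUnit_add_left_of_commute hu1 ((Commute.one_right n).sub_right hnx)
    have hU2 : IsUnit (1 + (f - e)) := by
      rw [hts]
      have hid : (1 : R) + (x - n) = (1 + x) + (-n) := by noncomm_ring
      rw [hid]
      exact hn.neg.isUnit_add_left_of_commute hu1'
        (((Commute.one_right n).add_right hnx).neg_left)
    have hs0 : f - e = 0 := main1' hf he hef.symm hU1 hU2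
    have hx' : x = (f - e) + n := by rw [hc]; noncomm_ring
    rw [hx', hs0, zero_add]
    exact hn
  · -- x = -e - f + n
    have hnx : Commute n x := by
      rw [hc]; exact ((hen.symm.neg_right.sub_right hfn.symm).add_right (Commute.refl n))
    have hts : e + f = n - x := by rw [hc]; noncomm_ring
    have hU1 : IsUnit (1 - (e + f)) := by
      rw [hts]
      have hid : (1 : R) - (n - x) = (1 + x) + (-n) := by noncomm_ring
      rw [hid]
      exact hn.neg.isUnit_add_left_of_commute hu1'
        (((Commute.one_right n).add_right hnx).neg_left)
    have hU2 : IsUnit (1 + (e + f)) := by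
      rw [hts]
      have hid : (1 : R) + (n - x) = (1 - x) + n := by noncomm_ring
      rw [hid]
      exact hn.isUnit_add_left_of_commute hu1 ((Commute.one_right n).sub_right hnx)
    have hU3 : IsUnit (1 + (e + f) * (e + f)) := by
      rw [hts]
      have hid : (1 : R) + (n - x) * (n - x) = (1 + x * x) + n * (n - 2 * x) := by
        have h2 : (1 : R) + (n - x) * (n - x) - ((1 + x * x) + n * (n - 2 * x))
            = n * x - x * n := by noncomm_ring
        have h3 : n * x - x * n = 0 := by rw [hnx.eq, sub_self]
        rw [h3] at h2
        exact sub_eq_zero.mp h2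
      rw [hid]
      have c2x : Commute n (2 * x) := by
        refine Commute.mul_right ?_ hnx
        show n * (2 : R) = (2 : R) * n
        noncomm_ring
      have cm : Commute (n * (n - 2 * x)) (1 + x * x) := by
        refine Commute.mul_left ?_ ?_
        · exact (Commute.one_right n).add_right (hnx.mul_right hnx)
        · refine Commute.sub_left ((Commute.one_right n).add_right (hnx.mul_right hnx)) ?_
          refine Commute.mul_left ?_ ?_
          · show (2 : R) * (1 + x * x) = (1 + x * x) * 2
            noncomm_ring
          · exact (Commute.one_right x).add_right
              ((Commute.refl x).mul_right (Commute.refl x))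
      have hmnil : IsNilpotent (n * (n - 2 * x)) :=
        ((Commute.refl n).sub_right c2x).isNilpotent_mul_right hn
      exact hmnil.isUnit_add_left_of_commute hu2 cm
    have ht : IsNilpotent (e + f) := main2' he hf hef h120 hU1 hU2 hU3
    have hx' : x = n + (-(e + f)) := by rw [hc]; noncomm_ring
    rw [hx']
    exact ((hen.symm.add_right hfn.symm).neg_right).isNilpotent_add hn ht.neg



end Aux

theorem jacobson_nil_of_wsnc {R : Type*} [Ring R]
    (hR : IsWeaklyStrongly2NilClean R) :
    ∀ x ∈ Ideal.jacobson (⊥ : Ideal R), IsNilpotent x := by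
  exact jacobson_nil_of_wsnc' hR
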